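/- Truncation error of the O-SVD: let A = (U *₃ S *₃ V) ×₃ U⁽³⁾ be the O-SVD of A ∈ ℝ^{I₁×I₂×I₃} (U⁽³⁾ orthogonal, each frontal slice U(:,:,i), V(:,:,i) orthogonal, S(:,:,i) nonnegative diagonal with entries s_{jji}), and let A_k be the truncation keeping the first k₁ frontal slices and, within slice i ≤ k₁, the first k_{2i} singular triplets. Then ‖A − A_k‖_F² = ∑_{i=1}^{k₁} ∑_{j=k_{2i}+1}^{r₂} s_{jji}² + ∑_{i=k₁+1}^{I₃} ∑_{j=1}^{r₂} s_{jji}², where r₂ = min{I₁,I₂}. -/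
import Mathlib


open Matrix

lemma frob_sum_eq_trace {m n : ℕ} (Y : Matrix (Fin m) (Fin n) ℝ) :
    ∑ i, ∑ j, Y i j ^ 2 = Matrix.trace (Yᵀ * Y) := by
  rw [Finset.sum_comm]
  simp [Matrix.trace, Matrix.mul_apply, Matrix.diag, sq]

lemma frob_orth {m n : ℕ} (P : Matrix (Fin m) (Fin m) ℝ) (hP : Pᵀ * P = 1)
    (Q : Matrix (Fin n) (Fin n) ℝ) (hQ : Q * Qᵀ = 1)
    (X : Matrix (Fin m) (Fin n) ℝ) :
    ∑ i, ∑ j, (P * X * Q) i j ^ 2 = ∑ i, ∑ j, X i j ^ 2 := by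
  rw [frob_sum_eq_trace, frob_sum_eq_trace]
  have h1 : (P * X * Q)ᵀ * (P * X * Q) = Qᵀ * (Xᵀ * X) * Q := by
    calc (P * X * Q)ᵀ * (P * X * Q) = Qᵀ * (Xᵀ * ((Pᵀ * P) * (X * Q))) := by
          simp [Matrix.transpose_mul, Matrix.mul_assoc]
      _ = Qᵀ * (Xᵀ * X) * Q := by rw [hP]; simp [Matrix.mul_assoc]
  rw [h1, Matrix.trace_mul_cycle, ← Matrix.mul_assoc, hQ, Matrix.one_mul]

lemma sum_ite_lt_zero (n k : ℕ) (f : ℕ → ℝ) :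
    ∑ i ∈ Finset.range n, (if i < k then 0 else f i) = ∑ i ∈ Finset.Ico k n, f i := by
  rw [Finset.sum_ite, Finset.sum_const_zero, zero_add]
  apply Finset.sum_congr _ (fun _ _ => rfl)
  ext i; simp [Finset.mem_Ico]; omega

lemma diag_sq_sum {I₁ I₂ : ℕ} (e : ℕ → ℝ) :
    ∑ i : Fin I₁, ∑ j : Fin I₂, (if (i : ℕ) = (j : ℕ) then e i else 0) ^ 2
      = ∑ j ∈ Finset.range (min I₁ I₂), e j ^ 2 := by
  have h : ∀ i : Fin I₁, ∑ j : Fin I₂, (if (i : ℕ) = (j : ℕ) then e i else 0) ^ 2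
      = if (i : ℕ) < I₂ then e i ^ 2 else 0 := by
    intro i
    rw [Fin.sum_univ_eq_sum_range (fun j => (if (i : ℕ) = j then e i else 0) ^ 2)]
    have hsq : ∀ x : ℕ, (if (i : ℕ) = x then e i else 0) ^ 2
        = if (i : ℕ) = x then e i ^ 2 else 0 := fun x => by split <;> simp
    simp_rw [hsq]
    rw [Finset.sum_ite_eq (Finset.range I₂) (i : ℕ) (fun _ => e i ^ 2)]
    simp [Finset.mem_range]
  simp_rw [h]
  rw [Fin.sum_univ_eq_sum_range (fun i => if i < I₂ then e i ^ 2 else 0)]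
  rw [← Finset.sum_subset (Finset.range_subset_range.2 (min_le_left I₁ I₂))
      (fun x hx hx' => by simp only [Finset.mem_range] at *; rw [if_neg]; omega)]
  apply Finset.sum_congr rfl
  intro x hx; simp only [Finset.mem_range] at hx; rw [if_pos]; omega

lemma sum_castLE {I₃ k₁ : ℕ} (hk₁ : k₁ ≤ I₃) (g : Fin I₃ → ℝ) :
    ∑ c : Fin k₁, g (Fin.castLE hk₁ c) = ∑ c : Fin I₃, if (c : ℕ) < k₁ then g c else 0 := by
  classical
  let gg : ℕ → ℝ := fun n => if h : n < I₃ then g ⟨n, h⟩ else 0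
  have h1 : ∀ c : Fin k₁, g (Fin.castLE hk₁ c) = gg (c : ℕ) := by
    intro c
    show g (Fin.castLE hk₁ c) = if h : (c : ℕ) < I₃ then g ⟨c, h⟩ else 0
    rw [dif_pos (lt_of_lt_of_le c.2 hk₁)]
    rfl
  have h2 : ∀ c : Fin I₃, g c = gg (c : ℕ) := by
    intro c
    show g c = if h : (c : ℕ) < I₃ then g ⟨c, h⟩ else 0
    rw [dif_pos c.2]
  simp_rw [h1, h2]
  rw [Fin.sum_univ_eq_sum_range gg k₁,
    Fin.sum_univ_eq_sum_range (fun n => if n < k₁ then gg n else 0) I₃]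
  rw [← Finset.sum_subset (Finset.range_subset_range.2 hk₁)
      (fun x hx hx' => by
        simp only [Finset.mem_range] at hx hx'; exact if_neg (by omega))]
  exact Finset.sum_congr rfl fun x hx => by
    simp only [Finset.mem_range] at hx; rw [if_pos hx]

/-- Truncation error of the O-SVD (Theorem 3.5).  The tensor
`A = (U *₃ S *₃ V) ×₃ U⁽³⁾` is given entrywise by
`A i j l = ∑ c, (U c * S c * V c) i j * U⁽³⁾ l c`, where `U⁽³⁾` is orthogonal,
each frontal slice `U c`, `V c` is orthogonal and `S c` is nonnegative diagonal
with diagonal entries `d c ·`.  The truncation `A_k` keeps the first `k₁`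
frontal slices and, within slice `c < k₁`, the first `k₂ c` singular triplets
(realized by zeroing the diagonal of `S c` from position `k₂ c` on).  Then
`‖A − A_k‖_F² = ∑_{i<k₁} ∑_{j=k₂ᵢ}^{r₂-1} s_{jji}² + ∑_{i≥k₁} ∑_{j<r₂} s_{jji}²`
with `r₂ = min I₁ I₂`. -/
theorem tosvd_truncation_error {I₁ I₂ I₃ k₁ : ℕ} (hk₁ : k₁ ≤ I₃)
    (U3 : Matrix (Fin I₃) (Fin I₃) ℝ) (hU3 : U3ᵀ * U3 = 1) (hU3' : U3 * U3ᵀ = 1)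
    (U : Fin I₃ → Matrix (Fin I₁) (Fin I₁) ℝ)
    (hU : ∀ c, (U c)ᵀ * U c = 1) (hU' : ∀ c, U c * (U c)ᵀ = 1)
    (V : Fin I₃ → Matrix (Fin I₂) (Fin I₂) ℝ)
    (hV : ∀ c, (V c)ᵀ * V c = 1) (hV' : ∀ c, V c * (V c)ᵀ = 1)
    (d : Fin I₃ → ℕ → ℝ) (hd : ∀ c j, 0 ≤ d c j)
    (S : Fin I₃ → Matrix (Fin I₁) (Fin I₂) ℝ)
    (hS : ∀ c i j, S c i j = if (i : ℕ) = (j : ℕ) then d c i else 0)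
    (k₂ : Fin I₃ → ℕ)
    (Strunc : Fin I₃ → Matrix (Fin I₁) (Fin I₂) ℝ)
    (hStrunc : ∀ c i j, Strunc c i j = if (i : ℕ) < k₂ c then S c i j else 0)
    (A Ak : Fin I₁ → Fin I₂ → Fin I₃ → ℝ)
    (hA : ∀ i j l, A i j l = ∑ c, (U c * S c * V c) i j * U3 l c)
    (hAk : ∀ i j l, Ak i j l =
      ∑ c : Fin k₁,
        (U (Fin.castLE hk₁ c) * Strunc (Fin.castLE hk₁ c) * V (Fin.castLE hk₁ c)) i j *
          U3 l (Fin.castLE hk₁ c)) :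
    ∑ i, ∑ j, ∑ l, (A i j l - Ak i j l) ^ 2 =
      (∑ c : Fin k₁, ∑ j ∈ Finset.Ico (k₂ (Fin.castLE hk₁ c)) (min I₁ I₂),
          (d (Fin.castLE hk₁ c) j) ^ 2) +
        ∑ c : Fin I₃, if k₁ ≤ (c : ℕ) then
          ∑ j ∈ Finset.range (min I₁ I₂), (d c j) ^ 2 else 0 := by
  classical
  set T : Fin I₃ → Matrix (Fin I₁) (Fin I₂) ℝ :=
    fun c => if (c : ℕ) < k₁ then Strunc c else 0 with hT
  set M : Fin I₃ → Matrix (Fin I₁) (Fin I₂) ℝ :=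
    fun c => U c * (S c - T c) * V c with hM
  -- rewrite Ak as a sum over all of Fin I₃
  have hAk' : ∀ i j l, Ak i j l = ∑ c : Fin I₃, (U c * T c * V c) i j * U3 l c := by
    intro i j l
    rw [hAk]
    rw [sum_castLE hk₁ (fun c => (U c * Strunc c * V c) i j * U3 l c)]
    apply Finset.sum_congr rfl
    intro c _
    by_cases hc : (c : ℕ) < k₁
    · rw [if_pos hc]; simp only [hT, if_pos hc]
    · rw [if_neg hc]; simp only [hT, if_neg hc]
      simp
  -- the difference tensor
  have hdiff : ∀ i j l, A i j l - Ak i j l = ∑ c, M c i j * U3 l c := by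
    intro i j l
    rw [hA, hAk', ← Finset.sum_sub_distrib]
    apply Finset.sum_congr rfl
    intro c _
    have : M c = U c * S c * V c - U c * T c * V c := by
      rw [hM]
      simp only [Matrix.sub_mul, Matrix.mul_sub]
    rw [this, Matrix.sub_apply, sub_mul]
  -- orthogonality of U3 columns
  have horth3 : ∀ c c' : Fin I₃, ∑ l, U3 l c * U3 l c' = if c = c' then 1 else 0 := by
    intro c c'
    have := congrFun (congrFun hU3 c) c'
    simpa [Matrix.mul_apply, Matrix.one_apply, Matrix.transpose_apply] using this
  have hsum_l : ∀ x : Fin I₃ → ℝ, ∑ l, (∑ c, x c * U3 l c) ^ 2 = ∑ c, x c ^ 2 := by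
    intro x
    calc ∑ l, (∑ c, x c * U3 l c) ^ 2
        = ∑ l, ∑ c, ∑ c', (x c * x c') * (U3 l c * U3 l c') := by
          apply Finset.sum_congr rfl
          intro l _
          rw [sq, Finset.sum_mul_sum]
          apply Finset.sum_congr rfl
          intro c _
          apply Finset.sum_congr rfl
          intro c' _
          ring
      _ = ∑ c, ∑ c', (x c * x c') * ∑ l, U3 l c * U3 l c' := by
          rw [Finset.sum_comm]
          apply Finset.sum_congr rfl
          intro c _
          rw [Finset.sum_comm]
          apply Finset.sum_congr rfl
          intro c' _
          rw [Finset.mul_sum]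
      _ = ∑ c, x c ^ 2 := by
          simp_rw [horth3]
          simp [sq]
  -- per-slice Frobenius norm
  have hslice : ∀ c : Fin I₃, ∑ i, ∑ j, ((S c - T c) i j) ^ 2 =
      if (c : ℕ) < k₁ then ∑ j ∈ Finset.Ico (k₂ c) (min I₁ I₂), d c j ^ 2
      else ∑ j ∈ Finset.range (min I₁ I₂), d c j ^ 2 := by
    intro c
    by_cases hc : (c : ℕ) < k₁
    · set e : ℕ → ℝ := fun n => if n < k₂ c then 0 else d c n with he
      have hentry : ∀ i j, (S c - T c) i j = if (i : ℕ) = (j : ℕ) then e i else 0 := by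
        intro i j
        rw [Matrix.sub_apply]
        simp only [hT, if_pos hc]
        rw [hStrunc, hS]
        simp only [he]
        split_ifs <;> ring
      simp_rw [hentry]
      rw [diag_sq_sum e, if_pos hc]
      have : ∀ n, e n ^ 2 = if n < k₂ c then 0 else d c n ^ 2 := by
        intro n; simp only [he]; split_ifs <;> simp
      simp_rw [this]
      exact sum_ite_lt_zero _ _ _
    · have hentry : ∀ i j, (S c - T c) i j = if (i : ℕ) = (j : ℕ) then d c i else 0 := by
        intro i j
        rw [Matrix.sub_apply]
        simp only [hT, if_neg hc]
        rw [hS]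
        simp
      simp_rw [hentry]
      rw [diag_sq_sum (d c), if_neg hc]
  -- put everything together
  calc ∑ i, ∑ j, ∑ l, (A i j l - Ak i j l) ^ 2
      = ∑ i, ∑ j, ∑ c, (M c i j) ^ 2 := by
        apply Finset.sum_congr rfl; intro i _
        apply Finset.sum_congr rfl; intro j _
        simp_rw [hdiff]
        exact hsum_l _
    _ = ∑ c, ∑ i, ∑ j, (M c i j) ^ 2 := by
        rw [show (∑ i, ∑ j, ∑ c, (M c i j) ^ 2) = ∑ i, ∑ c, ∑ j, (M c i j) ^ 2 from
          Finset.sum_congr rfl (fun i _ => Finset.sum_comm), Finset.sum_comm]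
    _ = ∑ c, ∑ i, ∑ j, ((S c - T c) i j) ^ 2 := by
        apply Finset.sum_congr rfl; intro c _
        exact frob_orth (U c) (hU c) (V c) (hV' c) (S c - T c)
    _ = ∑ c : Fin I₃, (if (c : ℕ) < k₁ then ∑ j ∈ Finset.Ico (k₂ c) (min I₁ I₂), d c j ^ 2
          else ∑ j ∈ Finset.range (min I₁ I₂), d c j ^ 2) := by
        exact Finset.sum_congr rfl (fun c _ => hslice c)
    _ = (∑ c : Fin k₁, ∑ j ∈ Finset.Ico (k₂ (Fin.castLE hk₁ c)) (min I₁ I₂),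
          (d (Fin.castLE hk₁ c) j) ^ 2) +
        ∑ c : Fin I₃, if k₁ ≤ (c : ℕ) then
          ∑ j ∈ Finset.range (min I₁ I₂), (d c j) ^ 2 else 0 := by
        rw [sum_castLE hk₁ (fun c => ∑ j ∈ Finset.Ico (k₂ c) (min I₁ I₂), d c j ^ 2)]
        rw [← Finset.sum_add_distrib]
        apply Finset.sum_congr rfl
        intro c _
        by_cases hc : (c : ℕ) < k₁
        · rw [if_pos hc, if_pos hc, if_neg (by omega), add_zero]
        · rw [if_neg hc, if_neg hc, if_pos (by omega), zero_add]
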